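/- Let F be an algebraically closed field, n ≥ 2, and let s ∈ Sp_{2n}(F) be the diagonal element of the symplectic group whose eigenvalues on the natural 2n-dimensional symplectic module are a₁, …, a_n, a₁⁻¹, …, a_n⁻¹ for given a₁, …, a_n ∈ Fˣ (the pair aᵢ, aᵢ⁻¹ acting on the i-th hyperbolic plane of a symplectic basis). Assume s is non-central (s ≠ ±Id) and non-regular (there exist i ≠ j with aᵢ = a_j or aᵢ·a_j = 1, or there exists i with aᵢ² = 1). Then either (a) n = 2 and, up to permuting and inverting a₁ and a₂, either a₁ = a₂ = a with a² ≠ 1 (s has Jordan form diag(a, a⁻¹, a, a⁻¹) with respect to an ordered symplectic basis (e₁, f₁, e₂, f₂)) or char F ≠ 2 and (a₁, a₂) = (1, −1) (s = ±diag(1, 1, −1, −1)); or (b) there exist subgroups K and Y of Sp_{2n}(F), each normalized by the diagonal maximal torus, such that: every element of K commutes with every element of Y; s commutes with every element of K; s fails to commute with some element of Y; K is isomorphic as an abstract group to SL_2(F); and Y is isomorphic as an abstract group to Sp_{2m}(F) for some m ≥ 1 (where Sp_2(F) = SL_2(F)). -/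

import Mathlib

namespace Sp42
open Matrix
variable {F : Type*} [Field F] {n : ℕ}

lemma sb_transpose (i j : Fin n ⊕ Fin n) (c : F) :
    (single i j c)ᵀ = single j i c := by
  ext x y
  simp only [transpose_apply, single, of_apply]
  by_cases h1 : i = y <;> by_cases h2 : j = x <;> simp [h1, h2]

lemma sb_mul_same {i j k : Fin n ⊕ Fin n} (c d : F) :
    single i j c * single j k d = single i k (c * d) :=
  single_mul_single_same (c := c) _ _ _ _

lemma sb_mul_ne {i j k l : Fin n ⊕ Fin n} (h : j ≠ k) (c d : F) :
    single i j c * single k l d = 0 :=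
  single_mul_single_of_ne (c := c) _ _ _ h _

def blk (r₁ r₂ c₁ c₂ : Fin n ⊕ Fin n) (p q r s : F) : Matrix (Fin n ⊕ Fin n) (Fin n ⊕ Fin n) F :=
  single r₁ c₁ p + single r₁ c₂ q + single r₂ c₁ r + single r₂ c₂ s

lemma blk_zero (r₁ r₂ c₁ c₂ : Fin n ⊕ Fin n) : blk r₁ r₂ c₁ c₂ (0:F) 0 0 0 = 0 := by
  simp [blk]

lemma blk_eq_zero {r₁ r₂ c₁ c₂ : Fin n ⊕ Fin n} {p q r s : F}
    (hp : p = 0) (hq : q = 0) (hr : r = 0) (hs : s = 0) : blk r₁ r₂ c₁ c₂ p q r s = 0 := by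
  subst hp; subst hq; subst hr; subst hs; exact blk_zero _ _ _ _

lemma blk_congr {r₁ r₂ c₁ c₂ : Fin n ⊕ Fin n} {p q r s p' q' r' s' : F}
    (hp : p = p') (hq : q = q') (hr : r = r') (hs : s = s') :
    blk r₁ r₂ c₁ c₂ p q r s = blk r₁ r₂ c₁ c₂ p' q' r' s' := by
  subst hp; subst hq; subst hr; subst hs; rfl

lemma blk_add (r₁ r₂ c₁ c₂ : Fin n ⊕ Fin n) (p q r s p' q' r' s' : F) :
    blk r₁ r₂ c₁ c₂ p q r s + blk r₁ r₂ c₁ c₂ p' q' r' s' =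
      blk r₁ r₂ c₁ c₂ (p+p') (q+q') (r+r') (s+s') := by
  simp only [blk, single_add]; abel

lemma blk_mul (r₁ r₂ c₁ c₂ a b : Fin n ⊕ Fin n) (hab : a ≠ b)
    (p q r s p' q' r' s' : F) :
    blk r₁ r₂ a b p q r s * blk a b c₁ c₂ p' q' r' s' =
      blk r₁ r₂ c₁ c₂ (p*p'+q*r') (p*q'+q*s') (r*p'+s*r') (r*q'+s*s') := by
  simp only [blk, add_mul, mul_add, sb_mul_same, sb_mul_ne hab, sb_mul_ne hab.symm,
    single_add, add_zero, zero_add]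
  abel

lemma blk_mul_disjoint (r₁ r₂ c₁ c₂ a b c d : Fin n ⊕ Fin n)
    (h₁ : c₁ ≠ a) (h₂ : c₁ ≠ b) (h₃ : c₂ ≠ a) (h₄ : c₂ ≠ b)
    (p q r s p' q' r' s' : F) :
    blk r₁ r₂ c₁ c₂ p q r s * blk a b c d p' q' r' s' = 0 := by
  simp only [blk, add_mul, mul_add, sb_mul_ne h₁, sb_mul_ne h₂, sb_mul_ne h₃,
    sb_mul_ne h₄, add_zero, zero_add]

lemma blk_transpose (r₁ r₂ c₁ c₂ : Fin n ⊕ Fin n) (p q r s : F) :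
    (blk r₁ r₂ c₁ c₂ p q r s)ᵀ = blk c₁ c₂ r₁ r₂ p r q s := by
  simp only [blk, transpose_add, sb_transpose]; abel

lemma blk_swap_rows (r₁ r₂ c₁ c₂ : Fin n ⊕ Fin n) (p q r s : F) :
    blk r₁ r₂ c₁ c₂ p q r s = blk r₂ r₁ c₁ c₂ r s p q := by
  simp only [blk]; abel

lemma blk_swap_cols (r₁ r₂ c₁ c₂ : Fin n ⊕ Fin n) (p q r s : F) :
    blk r₁ r₂ c₁ c₂ p q r s = blk r₁ r₂ c₂ c₁ q p s r := by
  simp only [blk]; abel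

lemma diagonal_mul_sb (d : Fin n ⊕ Fin n → F) (i j : Fin n ⊕ Fin n) (c : F) :
    diagonal d * single i j c = single i j (d i * c) := by
  ext x y
  rw [diagonal_mul]
  simp only [single, of_apply]
  by_cases h1 : i = x <;> by_cases h2 : j = y <;> simp [h1, h2]

lemma sb_mul_diagonal (d : Fin n ⊕ Fin n → F) (i j : Fin n ⊕ Fin n) (c : F) :
    single i j c * diagonal d = single i j (c * d j) := by
  ext x y
  rw [mul_diagonal]
  simp only [single, of_apply]
  by_cases h1 : i = x <;> by_cases h2 : j = y <;> simp [h1, h2, mul_comm]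

lemma diagonal_mul_blk (d : Fin n ⊕ Fin n → F) (r₁ r₂ c₁ c₂ : Fin n ⊕ Fin n) (p q r s : F) :
    diagonal d * blk r₁ r₂ c₁ c₂ p q r s =
      blk r₁ r₂ c₁ c₂ (d r₁ * p) (d r₁ * q) (d r₂ * r) (d r₂ * s) := by
  simp only [blk, mul_add, diagonal_mul_sb]

lemma blk_mul_diagonal (d : Fin n ⊕ Fin n → F) (r₁ r₂ c₁ c₂ : Fin n ⊕ Fin n) (p q r s : F) :
    blk r₁ r₂ c₁ c₂ p q r s * diagonal d =
      blk r₁ r₂ c₁ c₂ (p * d c₁) (q * d c₂) (r * d c₁) (s * d c₂) := by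
  simp only [blk, add_mul, sb_mul_diagonal]



lemma sb_mul_J_inl (x : Fin n ⊕ Fin n) (i : Fin n) (c : F) :
    single x (Sum.inl i) c * J (Fin n) F = single x (Sum.inr i) (-c) := by
  ext u v
  rw [mul_apply]
  rcases v with v | v <;>
  · simp only [J, single, of_apply, fromBlocks_apply₁₁, fromBlocks_apply₁₂,
      fromBlocks_apply₂₁, fromBlocks_apply₂₂, Fintype.sum_sum_type, Sum.inl.injEq, Sum.inr.injEq,
      ite_and, one_apply, Matrix.neg_apply, Matrix.zero_apply, mul_ite, mul_zero, mul_one, mul_neg,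
      Finset.sum_ite_eq, Finset.sum_ite_eq', Finset.mem_univ, if_true]
    split_ifs <;> simp_all

lemma sb_mul_J_inr (x : Fin n ⊕ Fin n) (i : Fin n) (c : F) :
    single x (Sum.inr i) c * J (Fin n) F = single x (Sum.inl i) c := by
  ext u v
  rw [mul_apply]
  rcases v with v | v <;>
  · simp only [J, single, of_apply, fromBlocks_apply₁₁, fromBlocks_apply₁₂,
      fromBlocks_apply₂₁, fromBlocks_apply₂₂, Fintype.sum_sum_type, Sum.inl.injEq, Sum.inr.injEq,
      ite_and, one_apply, Matrix.neg_apply, Matrix.zero_apply, mul_ite, mul_zero, mul_one, mul_neg,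
      Finset.sum_ite_eq, Finset.sum_ite_eq', Finset.mem_univ, if_true]
    split_ifs <;> simp_all

lemma J_mul_sb_inl (y : Fin n ⊕ Fin n) (i : Fin n) (c : F) :
    J (Fin n) F * single (Sum.inl i) y c = single (Sum.inr i) y c := by
  ext u v
  rw [mul_apply]
  rcases u with u | u <;>
  · simp only [J, single, of_apply, fromBlocks_apply₁₁, fromBlocks_apply₁₂,
      fromBlocks_apply₂₁, fromBlocks_apply₂₂, Fintype.sum_sum_type, Sum.inl.injEq, Sum.inr.injEq,
      ite_and, one_apply, Matrix.neg_apply, Matrix.zero_apply, ite_mul, zero_mul, one_mul, neg_mul,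
      Finset.sum_ite_eq, Finset.sum_ite_eq', Finset.mem_univ, if_true]
    split_ifs <;> simp_all

lemma J_mul_sb_inr (y : Fin n ⊕ Fin n) (i : Fin n) (c : F) :
    J (Fin n) F * single (Sum.inr i) y c = single (Sum.inl i) y (-c) := by
  ext u v
  rw [mul_apply]
  rcases u with u | u <;>
  · simp only [J, single, of_apply, fromBlocks_apply₁₁, fromBlocks_apply₁₂,
      fromBlocks_apply₂₁, fromBlocks_apply₂₂, Fintype.sum_sum_type, Sum.inl.injEq, Sum.inr.injEq,
      ite_and, one_apply, Matrix.neg_apply, Matrix.zero_apply, ite_mul, zero_mul, one_mul, neg_mul,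
      Finset.sum_ite_eq, Finset.sum_ite_eq', Finset.mem_univ, if_true]
    split_ifs <;> simp_all


lemma blk_mul_J_clr (r₁ r₂ : Fin n ⊕ Fin n) (i j : Fin n) (p q r s : F) :
    blk r₁ r₂ (Sum.inl i) (Sum.inr j) p q r s * J (Fin n) F =
      blk r₁ r₂ (Sum.inr i) (Sum.inl j) (-p) q (-r) s := by
  simp only [blk, add_mul, sb_mul_J_inl, sb_mul_J_inr]

lemma blk_mul_J_cll (r₁ r₂ : Fin n ⊕ Fin n) (i j : Fin n) (p q r s : F) :
    blk r₁ r₂ (Sum.inl i) (Sum.inl j) p q r s * J (Fin n) F =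
      blk r₁ r₂ (Sum.inr i) (Sum.inr j) (-p) (-q) (-r) (-s) := by
  simp only [blk, add_mul, sb_mul_J_inl]

lemma blk_mul_J_crr (r₁ r₂ : Fin n ⊕ Fin n) (i j : Fin n) (p q r s : F) :
    blk r₁ r₂ (Sum.inr i) (Sum.inr j) p q r s * J (Fin n) F =
      blk r₁ r₂ (Sum.inl i) (Sum.inl j) p q r s := by
  simp only [blk, add_mul, sb_mul_J_inr]

lemma J_mul_blk_rlr (c₁ c₂ : Fin n ⊕ Fin n) (i j : Fin n) (p q r s : F) :
    J (Fin n) F * blk (Sum.inl i) (Sum.inr j) c₁ c₂ p q r s =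
      blk (Sum.inr i) (Sum.inl j) c₁ c₂ p q (-r) (-s) := by
  simp only [blk, mul_add, J_mul_sb_inl, J_mul_sb_inr]

lemma J_mul_blk_rll (c₁ c₂ : Fin n ⊕ Fin n) (i j : Fin n) (p q r s : F) :
    J (Fin n) F * blk (Sum.inl i) (Sum.inl j) c₁ c₂ p q r s =
      blk (Sum.inr i) (Sum.inr j) c₁ c₂ p q r s := by
  simp only [blk, mul_add, J_mul_sb_inl]

lemma J_mul_blk_rrr (c₁ c₂ : Fin n ⊕ Fin n) (i j : Fin n) (p q r s : F) :
    J (Fin n) F * blk (Sum.inr i) (Sum.inr j) c₁ c₂ p q r s =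
      blk (Sum.inl i) (Sum.inl j) c₁ c₂ (-p) (-q) (-r) (-s) := by
  simp only [blk, mul_add, J_mul_sb_inr]

lemma expand_conj (B C : Matrix (Fin n ⊕ Fin n) (Fin n ⊕ Fin n) F) :
    (1 + B) * J (Fin n) F * (1 + C) =
      J (Fin n) F + (J (Fin n) F * C + B * J (Fin n) F + B * J (Fin n) F * C) := by
  noncomm_ring

/-- one 2×2 "copy block": identity + block correction -/
def pOne (u v : Fin n ⊕ Fin n) (p q r s : F) : Matrix (Fin n ⊕ Fin n) (Fin n ⊕ Fin n) F :=
  1 + blk u v u v (p-1) q r (s-1)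

lemma pOne_congr {u v : Fin n ⊕ Fin n} {p q r s p' q' r' s' : F}
    (hp : p = p') (hq : q = q') (hr : r = r') (hs : s = s') :
    pOne u v p q r s = pOne u v p' q' r' s' := by
  subst hp; subst hq; subst hr; subst hs; rfl

lemma pOne_one (u v : Fin n ⊕ Fin n) : pOne u v (1:F) 0 0 1 = 1 := by
  rw [pOne, blk_eq_zero (by ring) rfl rfl (by ring), add_zero]

lemma expand_mul (B C : Matrix (Fin n ⊕ Fin n) (Fin n ⊕ Fin n) F) :
    (1 + B) * (1 + C) = 1 + (B + C + B * C) := by noncomm_ring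

lemma pOne_mul (u v : Fin n ⊕ Fin n) (huv : u ≠ v) (p q r s p' q' r' s' : F) :
    pOne u v p q r s * pOne u v p' q' r' s' =
      pOne u v (p*p'+q*r') (p*q'+q*s') (r*p'+s*r') (r*q'+s*s') := by
  rw [pOne, pOne, expand_mul, blk_mul _ _ _ _ _ _ huv, blk_add, blk_add, pOne]
  exact congrArg _ (blk_congr (by ring) (by ring) (by ring) (by ring))

lemma pOne_mul_disjoint (u v u' v' : Fin n ⊕ Fin n)
    (h₁ : u ≠ u') (h₂ : u ≠ v') (h₃ : v ≠ u') (h₄ : v ≠ v') (p q r s p' q' r' s' : F) :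
    pOne u v p q r s * pOne u' v' p' q' r' s' =
      1 + (blk u v u v (p-1) q r (s-1) + blk u' v' u' v' (p'-1) q' r' (s'-1)) := by
  rw [pOne, pOne, expand_mul, blk_mul_disjoint _ _ _ _ _ _ _ _ h₁ h₂ h₃ h₄, add_zero]

lemma pOne_comm (u v u' v' : Fin n ⊕ Fin n)
    (h₁ : u ≠ u') (h₂ : u ≠ v') (h₃ : v ≠ u') (h₄ : v ≠ v') (p q r s p' q' r' s' : F) :
    pOne u v p q r s * pOne u' v' p' q' r' s' =
      pOne u' v' p' q' r' s' * pOne u v p q r s := by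
  rw [pOne_mul_disjoint _ _ _ _ h₁ h₂ h₃ h₄,
    pOne_mul_disjoint _ _ _ _ (Ne.symm h₁) (Ne.symm h₃) (Ne.symm h₂) (Ne.symm h₄), add_comm (blk u' v' _ _ _ _ _ _)]

lemma diagonal_conj_pOne (d e : Fin n ⊕ Fin n → F) (he : ∀ x, d x * e x = 1)
    (u v : Fin n ⊕ Fin n) (p q r s : F) :
    diagonal d * pOne u v p q r s * diagonal e =
      pOne u v (d u * p * e u) (d u * q * e v) (d v * r * e u) (d v * s * e v) := by
  have h1 : diagonal d * diagonal e = (1 : Matrix (Fin n ⊕ Fin n) (Fin n ⊕ Fin n) F) := by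
    rw [diagonal_mul_diagonal, show (fun x => d x * e x) = fun _ => (1:F) from funext he,
      diagonal_one]
  rw [pOne, mul_add, add_mul, mul_one, h1, diagonal_mul_blk, blk_mul_diagonal, pOne]
  refine congrArg _ (blk_congr ?_ (by ring) (by ring) ?_)
  · have := he u; linear_combination -this
  · have := he v; linear_combination -this

lemma diagonal_comm_pOne (d : Fin n ⊕ Fin n → F) (u v : Fin n ⊕ Fin n)
    (hd : d u = d v) (p q r s : F) :
    diagonal d * pOne u v p q r s = pOne u v p q r s * diagonal d := by
  rw [pOne, mul_add, add_mul, mul_one, one_mul, diagonal_mul_blk, blk_mul_diagonal]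
  exact congrArg _ (blk_congr (by ring) (by rw [hd]; ring) (by rw [hd]; ring) (by ring))

lemma blk_apply (r₁ r₂ c₁ c₂ x y : Fin n ⊕ Fin n) (p q r s : F) :
    blk r₁ r₂ c₁ c₂ p q r s x y =
      (if r₁ = x ∧ c₁ = y then p else 0) + (if r₁ = x ∧ c₂ = y then q else 0) +
      (if r₂ = x ∧ c₁ = y then r else 0) + (if r₂ = x ∧ c₂ = y then s else 0) := by
  simp only [blk, Matrix.add_apply, single, of_apply]

lemma pOne_apply_q (u v : Fin n ⊕ Fin n) (huv : u ≠ v) (p q r s : F) :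
    pOne u v p q r s u v = q := by
  rw [pOne, Matrix.add_apply, blk_apply, one_apply_ne huv]
  simp [huv, huv.symm]

/-- the one-plane embedding of a 2×2 matrix acting on the plane `(e i, f i)` -/
def psiM (i : Fin n) (p q r s : F) : Matrix (Fin n ⊕ Fin n) (Fin n ⊕ Fin n) F :=
  pOne (Sum.inl i) (Sum.inr i) p q r s

lemma psiM_mem (i : Fin n) (p q r s : F) (hdet : p * s - q * r = 1) :
    psiM i p q r s ∈ symplecticGroup (Fin n) F := by
  have hUV : (Sum.inl i : Fin n ⊕ Fin n) ≠ Sum.inr i := by simp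
  rw [SymplecticGroup.mem_iff, psiM, pOne, transpose_add, transpose_one, blk_transpose,
    expand_conj]
  rw [J_mul_blk_rlr, blk_mul_J_clr, blk_swap_cols (c₂ := Sum.inl i),
    blk_mul _ _ _ _ _ _ hUV, blk_swap_rows (r₂ := Sum.inl i), blk_add, blk_add]
  rw [add_eq_left]
  exact blk_eq_zero (by ring) (by linear_combination -hdet) (by linear_combination hdet) (by ring)

lemma merge6 (u₁ u₂ u₃ u₄ w₁ w₂ w₃ w₄ : Fin n ⊕ Fin n)
    (a1 a2 a3 a4 b1 b2 b3 b4 c1 c2 c3 c4 d1 d2 d3 d4 e1 e2 e3 e4 f1 f2 f3 f4 : F)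
    (hu1 : b1 + c1 + e1 = 0) (hu2 : b2 + c2 + e2 = 0)
    (hu3 : b3 + c3 + e3 = 0) (hu4 : b4 + c4 + e4 = 0)
    (hw1 : a1 + d1 + f1 = 0) (hw2 : a2 + d2 + f2 = 0)
    (hw3 : a3 + d3 + f3 = 0) (hw4 : a4 + d4 + f4 = 0) :
    (blk w₁ w₂ w₃ w₄ a1 a2 a3 a4 + blk u₁ u₂ u₃ u₄ b1 b2 b3 b4) +
      (blk u₁ u₂ u₃ u₄ c1 c2 c3 c4 + blk w₁ w₂ w₃ w₄ d1 d2 d3 d4) +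
      (blk u₁ u₂ u₃ u₄ e1 e2 e3 e4 + blk w₁ w₂ w₃ w₄ f1 f2 f3 f4) = 0 := by
  have step : (blk w₁ w₂ w₃ w₄ a1 a2 a3 a4 + blk u₁ u₂ u₃ u₄ b1 b2 b3 b4) +
      (blk u₁ u₂ u₃ u₄ c1 c2 c3 c4 + blk w₁ w₂ w₃ w₄ d1 d2 d3 d4) +
      (blk u₁ u₂ u₃ u₄ e1 e2 e3 e4 + blk w₁ w₂ w₃ w₄ f1 f2 f3 f4) =
      (blk u₁ u₂ u₃ u₄ b1 b2 b3 b4 + blk u₁ u₂ u₃ u₄ c1 c2 c3 c4 +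
        blk u₁ u₂ u₃ u₄ e1 e2 e3 e4) +
      (blk w₁ w₂ w₃ w₄ a1 a2 a3 a4 + blk w₁ w₂ w₃ w₄ d1 d2 d3 d4 +
        blk w₁ w₂ w₃ w₄ f1 f2 f3 f4) := by abel
  rw [step, blk_add, blk_add, blk_add, blk_add,
    blk_eq_zero hu1 hu2 hu3 hu4, blk_eq_zero hw1 hw2 hw3 hw4, add_zero]

/-- glued embedding for the case `a i * a j = 1`: acts on the pairs `(e i, f j)`, `(e j, f i)` -/
def gvM (i j : Fin n) (p q r s : F) : Matrix (Fin n ⊕ Fin n) (Fin n ⊕ Fin n) F :=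
  pOne (Sum.inl i) (Sum.inr j) p q r s * pOne (Sum.inl j) (Sum.inr i) p q r s

/-- glued embedding for the case `a i = a j`: acts by `g` on `(e i, e j)` and `(gᵀ)⁻¹` on
`(f i, f j)` -/
def gmM (i j : Fin n) (p q r s : F) : Matrix (Fin n ⊕ Fin n) (Fin n ⊕ Fin n) F :=
  pOne (Sum.inl i) (Sum.inl j) p q r s * pOne (Sum.inr i) (Sum.inr j) s (-r) (-q) p

section glued
variable {i j : Fin n}

lemma gvM_eq (hij : i ≠ j) (p q r s : F) :
    gvM i j p q r s = 1 + (blk (Sum.inl i) (Sum.inr j) (Sum.inl i) (Sum.inr j) (p-1) q r (s-1) +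
      blk (Sum.inl j) (Sum.inr i) (Sum.inl j) (Sum.inr i) (p-1) q r (s-1)) := by
  rw [gvM, pOne_mul_disjoint] <;> simp [hij, Ne.symm hij]

lemma gmM_eq (hij : i ≠ j) (p q r s : F) :
    gmM i j p q r s = 1 + (blk (Sum.inl i) (Sum.inl j) (Sum.inl i) (Sum.inl j) (p-1) q r (s-1) +
      blk (Sum.inr i) (Sum.inr j) (Sum.inr i) (Sum.inr j) (s-1) (-r) (-q) (p-1)) := by
  rw [gmM, pOne_mul_disjoint] <;> simp

lemma gvM_mem (hij : i ≠ j) (p q r s : F) (hdet : p * s - q * r = 1) :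
    gvM i j p q r s ∈ symplecticGroup (Fin n) F := by
  rw [SymplecticGroup.mem_iff, gvM_eq hij, transpose_add, transpose_one, transpose_add,
    blk_transpose, blk_transpose, expand_conj, add_eq_left]
  have hLiRj : (Sum.inl i : Fin n ⊕ Fin n) ≠ Sum.inr j := by simp
  have hLjRi : (Sum.inl j : Fin n ⊕ Fin n) ≠ Sum.inr i := by simp
  have hJC : J (Fin n) F *
      (blk (Sum.inl i) (Sum.inr j) (Sum.inl i) (Sum.inr j) (p-1) r q (s-1) +
       blk (Sum.inl j) (Sum.inr i) (Sum.inl j) (Sum.inr i) (p-1) r q (s-1)) =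
      blk (Sum.inl j) (Sum.inr i) (Sum.inl i) (Sum.inr j) (-q) (-(s-1)) (p-1) r +
      blk (Sum.inl i) (Sum.inr j) (Sum.inl j) (Sum.inr i) (-q) (-(s-1)) (p-1) r := by
    rw [mul_add, J_mul_blk_rlr, J_mul_blk_rlr,
      blk_swap_rows (Sum.inr i) (Sum.inl j) (Sum.inl i) (Sum.inr j) (p-1) r (-q) (-(s-1)),
      blk_swap_rows (Sum.inr j) (Sum.inl i) (Sum.inl j) (Sum.inr i) (p-1) r (-q) (-(s-1))]
  have hBJ : (blk (Sum.inl i) (Sum.inr j) (Sum.inl i) (Sum.inr j) (p-1) q r (s-1) +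
       blk (Sum.inl j) (Sum.inr i) (Sum.inl j) (Sum.inr i) (p-1) q r (s-1)) * J (Fin n) F =
      blk (Sum.inl i) (Sum.inr j) (Sum.inl j) (Sum.inr i) q (-(p-1)) (s-1) (-r) +
      blk (Sum.inl j) (Sum.inr i) (Sum.inl i) (Sum.inr j) q (-(p-1)) (s-1) (-r) := by
    rw [add_mul, blk_mul_J_clr, blk_mul_J_clr,
      blk_swap_cols (Sum.inl i) (Sum.inr j) (Sum.inr i) (Sum.inl j) (-(p-1)) q (-r) (s-1),
      blk_swap_cols (Sum.inl j) (Sum.inr i) (Sum.inr j) (Sum.inl i) (-(p-1)) q (-r) (s-1)]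
  have hBJC : (blk (Sum.inl i) (Sum.inr j) (Sum.inl i) (Sum.inr j) (p-1) q r (s-1) +
       blk (Sum.inl j) (Sum.inr i) (Sum.inl j) (Sum.inr i) (p-1) q r (s-1)) * J (Fin n) F *
      (blk (Sum.inl i) (Sum.inr j) (Sum.inl i) (Sum.inr j) (p-1) r q (s-1) +
       blk (Sum.inl j) (Sum.inr i) (Sum.inl j) (Sum.inr i) (p-1) r q (s-1)) =
      blk (Sum.inl i) (Sum.inr j) (Sum.inl j) (Sum.inr i)
        (q*(p-1)+(-(p-1))*q) (q*r+(-(p-1))*(s-1)) ((s-1)*(p-1)+(-r)*q) ((s-1)*r+(-r)*(s-1)) +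
      blk (Sum.inl j) (Sum.inr i) (Sum.inl i) (Sum.inr j)
        (q*(p-1)+(-(p-1))*q) (q*r+(-(p-1))*(s-1)) ((s-1)*(p-1)+(-r)*q) ((s-1)*r+(-r)*(s-1)) := by
    have n1 : (Sum.inl j : Fin n ⊕ Fin n) ≠ Sum.inl i := by simp [hij.symm]
    have n2 : (Sum.inl j : Fin n ⊕ Fin n) ≠ Sum.inr j := by simp
    have n3 : (Sum.inr i : Fin n ⊕ Fin n) ≠ Sum.inl i := by simp
    have n4 : (Sum.inr i : Fin n ⊕ Fin n) ≠ Sum.inr j := by simp [hij]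
    have n5 : (Sum.inl i : Fin n ⊕ Fin n) ≠ Sum.inl j := by simp [hij]
    have n6 : (Sum.inl i : Fin n ⊕ Fin n) ≠ Sum.inr i := by simp
    have n7 : (Sum.inr j : Fin n ⊕ Fin n) ≠ Sum.inl j := by simp
    have n8 : (Sum.inr j : Fin n ⊕ Fin n) ≠ Sum.inr i := by simp [hij.symm]
    rw [hBJ, add_mul, mul_add, mul_add,
      blk_mul_disjoint _ _ _ _ _ _ _ _ n1 n2 n3 n4,
      blk_mul_disjoint _ _ _ _ _ _ _ _ n5 n6 n7 n8,
      blk_mul _ _ _ _ _ _ hLjRi, blk_mul _ _ _ _ _ _ hLiRj, zero_add, add_zero]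
  rw [hBJC, hJC, hBJ]
  exact merge6 _ _ _ _ _ _ _ _ _ _ _ _ _ _ _ _ _ _ _ _ _ _ _ _ _ _ _ _ _ _ _ _
    (by ring) (by linear_combination -hdet) (by linear_combination hdet) (by ring)
    (by ring) (by linear_combination -hdet) (by linear_combination hdet) (by ring)

lemma gmM_mem (hij : i ≠ j) (p q r s : F) (hdet : p * s - q * r = 1) :
    gmM i j p q r s ∈ symplecticGroup (Fin n) F := by
  rw [SymplecticGroup.mem_iff, gmM_eq hij, transpose_add, transpose_one, transpose_add,
    blk_transpose, blk_transpose, expand_conj, add_eq_left]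
  have hLL : (Sum.inl i : Fin n ⊕ Fin n) ≠ Sum.inl j := by simp [hij]
  have hRR : (Sum.inr i : Fin n ⊕ Fin n) ≠ Sum.inr j := by simp [hij]
  have hJC : J (Fin n) F *
      (blk (Sum.inl i) (Sum.inl j) (Sum.inl i) (Sum.inl j) (p-1) r q (s-1) +
       blk (Sum.inr i) (Sum.inr j) (Sum.inr i) (Sum.inr j) (s-1) (-q) (-r) (p-1)) =
      blk (Sum.inr i) (Sum.inr j) (Sum.inl i) (Sum.inl j) (p-1) r q (s-1) +
      blk (Sum.inl i) (Sum.inl j) (Sum.inr i) (Sum.inr j) (-(s-1)) (-(-q)) (-(-r)) (-(p-1)) := by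
    rw [mul_add, J_mul_blk_rll, J_mul_blk_rrr]
  have hBJ : (blk (Sum.inl i) (Sum.inl j) (Sum.inl i) (Sum.inl j) (p-1) q r (s-1) +
       blk (Sum.inr i) (Sum.inr j) (Sum.inr i) (Sum.inr j) (s-1) (-r) (-q) (p-1)) * J (Fin n) F =
      blk (Sum.inl i) (Sum.inl j) (Sum.inr i) (Sum.inr j) (-(p-1)) (-q) (-r) (-(s-1)) +
      blk (Sum.inr i) (Sum.inr j) (Sum.inl i) (Sum.inl j) (s-1) (-r) (-q) (p-1) := by
    rw [add_mul, blk_mul_J_cll, blk_mul_J_crr]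
  have hBJC : (blk (Sum.inl i) (Sum.inl j) (Sum.inl i) (Sum.inl j) (p-1) q r (s-1) +
       blk (Sum.inr i) (Sum.inr j) (Sum.inr i) (Sum.inr j) (s-1) (-r) (-q) (p-1)) * J (Fin n) F *
      (blk (Sum.inl i) (Sum.inl j) (Sum.inl i) (Sum.inl j) (p-1) r q (s-1) +
       blk (Sum.inr i) (Sum.inr j) (Sum.inr i) (Sum.inr j) (s-1) (-q) (-r) (p-1)) =
      blk (Sum.inl i) (Sum.inl j) (Sum.inr i) (Sum.inr j)
        ((-(p-1))*(s-1)+(-q)*(-r)) ((-(p-1))*(-q)+(-q)*(p-1))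
        ((-r)*(s-1)+(-(s-1))*(-r)) ((-r)*(-q)+(-(s-1))*(p-1)) +
      blk (Sum.inr i) (Sum.inr j) (Sum.inl i) (Sum.inl j)
        ((s-1)*(p-1)+(-r)*q) ((s-1)*r+(-r)*(s-1)) ((-q)*(p-1)+(p-1)*q) ((-q)*r+(p-1)*(s-1)) := by
    have n1 : (Sum.inr i : Fin n ⊕ Fin n) ≠ Sum.inl i := by simp
    have n2 : (Sum.inr i : Fin n ⊕ Fin n) ≠ Sum.inl j := by simp
    have n3 : (Sum.inr j : Fin n ⊕ Fin n) ≠ Sum.inl i := by simp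
    have n4 : (Sum.inr j : Fin n ⊕ Fin n) ≠ Sum.inl j := by simp
    have n5 : (Sum.inl i : Fin n ⊕ Fin n) ≠ Sum.inr i := by simp
    have n6 : (Sum.inl i : Fin n ⊕ Fin n) ≠ Sum.inr j := by simp
    have n7 : (Sum.inl j : Fin n ⊕ Fin n) ≠ Sum.inr i := by simp
    have n8 : (Sum.inl j : Fin n ⊕ Fin n) ≠ Sum.inr j := by simp
    rw [hBJ, add_mul, mul_add, mul_add,
      blk_mul_disjoint _ _ _ _ _ _ _ _ n1 n2 n3 n4,
      blk_mul_disjoint _ _ _ _ _ _ _ _ n5 n6 n7 n8,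
      blk_mul _ _ _ _ _ _ hRR, blk_mul _ _ _ _ _ _ hLL, zero_add, add_zero]
  rw [hBJC, hJC, hBJ]
  exact merge6 _ _ _ _ _ _ _ _ _ _ _ _ _ _ _ _ _ _ _ _ _ _ _ _ _ _ _ _ _ _ _ _
    (by linear_combination -hdet) (by ring) (by ring) (by linear_combination -hdet)
    (by linear_combination hdet) (by ring) (by ring) (by linear_combination hdet)

lemma gvM_one : gvM i j (1:F) 0 0 1 = 1 := by
  rw [gvM, pOne_one, pOne_one, one_mul]

lemma gmM_one : gmM i j (1:F) 0 0 1 = 1 := by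
  rw [gmM, pOne_one, neg_zero, pOne_one, one_mul]

lemma gvM_mul (hij : i ≠ j) (p q r s P Q R S : F) :
    gvM i j p q r s * gvM i j P Q R S =
      gvM i j (p*P+q*R) (p*Q+q*S) (r*P+s*R) (r*Q+s*S) := by
  have hLiRj : (Sum.inl i : Fin n ⊕ Fin n) ≠ Sum.inr j := by simp
  have hLjRi : (Sum.inl j : Fin n ⊕ Fin n) ≠ Sum.inr i := by simp
  have n1 : (Sum.inl j : Fin n ⊕ Fin n) ≠ Sum.inl i := by simp [hij.symm]
  have n2 : (Sum.inl j : Fin n ⊕ Fin n) ≠ Sum.inr j := by simp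
  have n3 : (Sum.inr i : Fin n ⊕ Fin n) ≠ Sum.inl i := by simp
  have n4 : (Sum.inr i : Fin n ⊕ Fin n) ≠ Sum.inr j := by simp [hij]
  rw [gvM, gvM, mul_assoc, ← mul_assoc (pOne (Sum.inl j) (Sum.inr i) p q r s),
    pOne_comm _ _ _ _ n1 n2 n3 n4, mul_assoc, ← mul_assoc,
    pOne_mul _ _ hLiRj, pOne_mul _ _ hLjRi, gvM]

lemma gmM_mul (hij : i ≠ j) (p q r s P Q R S : F) :
    gmM i j p q r s * gmM i j P Q R S =
      gmM i j (p*P+q*R) (p*Q+q*S) (r*P+s*R) (r*Q+s*S) := by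
  have hLL : (Sum.inl i : Fin n ⊕ Fin n) ≠ Sum.inl j := by simp [hij]
  have hRR : (Sum.inr i : Fin n ⊕ Fin n) ≠ Sum.inr j := by simp [hij]
  have n1 : (Sum.inr i : Fin n ⊕ Fin n) ≠ Sum.inl i := by simp
  have n2 : (Sum.inr i : Fin n ⊕ Fin n) ≠ Sum.inl j := by simp
  have n3 : (Sum.inr j : Fin n ⊕ Fin n) ≠ Sum.inl i := by simp
  have n4 : (Sum.inr j : Fin n ⊕ Fin n) ≠ Sum.inl j := by simp
  rw [gmM, gmM, mul_assoc, ← mul_assoc (pOne (Sum.inr i) (Sum.inr j) s (-r) (-q) p),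
    pOne_comm _ _ _ _ n1 n2 n3 n4, mul_assoc, ← mul_assoc,
    pOne_mul _ _ hLL, pOne_mul _ _ hRR, gmM]
  rw [pOne_congr (p := s*S + -r*(-Q)) rfl rfl rfl rfl]
  exact congrArg _ (pOne_congr (by ring) (by ring) (by ring) (by ring))

lemma diagonal_conj_prod (d e : Fin n ⊕ Fin n → F) (he : ∀ x, e x * d x = 1)
    (A B : Matrix (Fin n ⊕ Fin n) (Fin n ⊕ Fin n) F) :
    diagonal d * (A * B) * diagonal e =
      (diagonal d * A * diagonal e) * (diagonal d * B * diagonal e) := by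
  have h1 : diagonal e * diagonal d = (1 : Matrix (Fin n ⊕ Fin n) (Fin n ⊕ Fin n) F) := by
    rw [diagonal_mul_diagonal, show (fun x => e x * d x) = fun _ => (1:F) from funext he,
      diagonal_one]
  rw [Matrix.mul_assoc (diagonal d * A),
    ← Matrix.mul_assoc (diagonal e) (diagonal d * B) (diagonal e),
    ← Matrix.mul_assoc (diagonal e) (diagonal d) B,
    h1, one_mul, ← Matrix.mul_assoc (diagonal d * A) B (diagonal e),
    Matrix.mul_assoc (diagonal d) A B]

section conj
variable (d e : Fin n ⊕ Fin n → F) (p q r s : F)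

lemma diagonal_conj_gvM (he : ∀ x, d x * e x = 1)
    (hi : d (Sum.inl i) * d (Sum.inr i) = 1) (hj : d (Sum.inl j) * d (Sum.inr j) = 1) :
    diagonal d * gvM i j p q r s * diagonal e =
      gvM i j (d (Sum.inl i) * p * e (Sum.inl i)) (d (Sum.inl i) * q * e (Sum.inr j))
        (d (Sum.inr j) * r * e (Sum.inl i)) (d (Sum.inr j) * s * e (Sum.inr j)) := by
  have eLi : e (Sum.inl i) = d (Sum.inr i) := by
    linear_combination (d (Sum.inr i)) * (he (Sum.inl i)) - (e (Sum.inl i)) * hi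
  have eLj : e (Sum.inl j) = d (Sum.inr j) := by
    linear_combination (d (Sum.inr j)) * (he (Sum.inl j)) - (e (Sum.inl j)) * hj
  have eRi : e (Sum.inr i) = d (Sum.inl i) := by
    linear_combination (d (Sum.inl i)) * (he (Sum.inr i)) - (e (Sum.inr i)) * (by linear_combination hi : d (Sum.inr i) * d (Sum.inl i) = 1)
  have eRj : e (Sum.inr j) = d (Sum.inl j) := by
    linear_combination (d (Sum.inl j)) * (he (Sum.inr j)) - (e (Sum.inr j)) * (by linear_combination hj : d (Sum.inr j) * d (Sum.inl j) = 1)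
  rw [gvM, diagonal_conj_prod d e (fun x => by linear_combination he x),
    diagonal_conj_pOne d e he, diagonal_conj_pOne d e he, gvM]
  refine congrArg (_ * ·) (pOne_congr ?_ ?_ ?_ ?_)
  · rw [eLj, eLi]; linear_combination p * hj - p * hi
  · rw [eRi, eRj]; ring
  · rw [eLj, eLi]; ring
  · rw [eRi, eRj]; linear_combination s * hi - s * hj

lemma diagonal_conj_gmM (he : ∀ x, d x * e x = 1)
    (hi : d (Sum.inl i) * d (Sum.inr i) = 1) (hj : d (Sum.inl j) * d (Sum.inr j) = 1) :
    diagonal d * gmM i j p q r s * diagonal e =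
      gmM i j (d (Sum.inl i) * p * e (Sum.inl i)) (d (Sum.inl i) * q * e (Sum.inl j))
        (d (Sum.inl j) * r * e (Sum.inl i)) (d (Sum.inl j) * s * e (Sum.inl j)) := by
  have eLi : e (Sum.inl i) = d (Sum.inr i) := by
    linear_combination (d (Sum.inr i)) * (he (Sum.inl i)) - (e (Sum.inl i)) * hi
  have eLj : e (Sum.inl j) = d (Sum.inr j) := by
    linear_combination (d (Sum.inr j)) * (he (Sum.inl j)) - (e (Sum.inl j)) * hj
  have eRi : e (Sum.inr i) = d (Sum.inl i) := by
    linear_combination (d (Sum.inl i)) * (he (Sum.inr i)) - (e (Sum.inr i)) * (by linear_combination hi : d (Sum.inr i) * d (Sum.inl i) = 1)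
  have eRj : e (Sum.inr j) = d (Sum.inl j) := by
    linear_combination (d (Sum.inl j)) * (he (Sum.inr j)) - (e (Sum.inr j)) * (by linear_combination hj : d (Sum.inr j) * d (Sum.inl j) = 1)
  rw [gmM, diagonal_conj_prod d e (fun x => by linear_combination he x),
    diagonal_conj_pOne d e he, diagonal_conj_pOne d e he, gmM]
  refine congrArg (_ * ·) (pOne_congr ?_ ?_ ?_ ?_)
  · rw [eRi, eLj]; linear_combination s * hi - s * hj
  · rw [eRj, eLi]; ring
  · rw [eRi, eLj]; ring
  · rw [eRj, eLi]; linear_combination p * hj - p * hi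

lemma diagonal_comm_gvM (hd1 : d (Sum.inl i) = d (Sum.inr j)) (hd2 : d (Sum.inl j) = d (Sum.inr i)) :
    diagonal d * gvM i j p q r s = gvM i j p q r s * diagonal d := by
  rw [gvM, ← Matrix.mul_assoc, diagonal_comm_pOne d _ _ hd1, Matrix.mul_assoc,
    diagonal_comm_pOne d _ _ hd2, ← Matrix.mul_assoc]

lemma diagonal_comm_gmM (hd1 : d (Sum.inl i) = d (Sum.inl j)) (hd2 : d (Sum.inr i) = d (Sum.inr j)) :
    diagonal d * gmM i j p q r s = gmM i j p q r s * diagonal d := by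
  rw [gmM, ← Matrix.mul_assoc, diagonal_comm_pOne d _ _ hd1, Matrix.mul_assoc,
    diagonal_comm_pOne d _ _ hd2, ← Matrix.mul_assoc]

end conj
lemma pOne_apply_p (u v : Fin n ⊕ Fin n) (huv : u ≠ v) (p q r s : F) :
    pOne u v p q r s u u = p := by
  rw [pOne, Matrix.add_apply, blk_apply, one_apply_eq]
  simp [huv, huv.symm]

lemma pOne_apply_r (u v : Fin n ⊕ Fin n) (huv : u ≠ v) (p q r s : F) :
    pOne u v p q r s v u = r := by
  rw [pOne, Matrix.add_apply, blk_apply, one_apply_ne (Ne.symm huv)]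
  simp [huv, huv.symm]

lemma pOne_apply_s (u v : Fin n ⊕ Fin n) (huv : u ≠ v) (p q r s : F) :
    pOne u v p q r s v v = s := by
  rw [pOne, Matrix.add_apply, blk_apply, one_apply_eq]
  simp [huv, huv.symm]

section glued2
variable {i j : Fin n}

lemma oneblk2_apply_p (u v u' v' : Fin n ⊕ Fin n) (huv : u ≠ v)
    (h1 : u' ≠ u) (h2 : u' ≠ v) (h3 : v' ≠ u) (h4 : v' ≠ v) (p q r s p' q' r' s' : F) :
    (1 + (blk u v u v (p-1) q r (s-1) + blk u' v' u' v' (p'-1) q' r' (s'-1))) u u = p := by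
  rw [Matrix.add_apply, Matrix.add_apply, blk_apply, blk_apply, one_apply_eq]
  simp [huv, huv.symm, h1, h2, h3, h4]

lemma oneblk2_apply_q (u v u' v' : Fin n ⊕ Fin n) (huv : u ≠ v)
    (h1 : u' ≠ u) (h2 : u' ≠ v) (h3 : v' ≠ u) (h4 : v' ≠ v) (p q r s p' q' r' s' : F) :
    (1 + (blk u v u v (p-1) q r (s-1) + blk u' v' u' v' (p'-1) q' r' (s'-1))) u v = q := by
  rw [Matrix.add_apply, Matrix.add_apply, blk_apply, blk_apply, one_apply_ne huv]
  simp [huv, huv.symm, h1, h2, h3, h4]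

lemma oneblk2_apply_r (u v u' v' : Fin n ⊕ Fin n) (huv : u ≠ v)
    (h1 : u' ≠ u) (h2 : u' ≠ v) (h3 : v' ≠ u) (h4 : v' ≠ v) (p q r s p' q' r' s' : F) :
    (1 + (blk u v u v (p-1) q r (s-1) + blk u' v' u' v' (p'-1) q' r' (s'-1))) v u = r := by
  rw [Matrix.add_apply, Matrix.add_apply, blk_apply, blk_apply, one_apply_ne (Ne.symm huv)]
  simp [huv, huv.symm, h1, h2, h3, h4]

lemma oneblk2_apply_s (u v u' v' : Fin n ⊕ Fin n) (huv : u ≠ v)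
    (h1 : u' ≠ u) (h2 : u' ≠ v) (h3 : v' ≠ u) (h4 : v' ≠ v) (p q r s p' q' r' s' : F) :
    (1 + (blk u v u v (p-1) q r (s-1) + blk u' v' u' v' (p'-1) q' r' (s'-1))) v v = s := by
  rw [Matrix.add_apply, Matrix.add_apply, blk_apply, blk_apply, one_apply_eq]
  simp [huv, huv.symm, h1, h2, h3, h4]

end glued2
end glued

lemma diag_facts (t : Matrix.symplecticGroup (Fin n) F)
    (ht : (t : Matrix (Fin n ⊕ Fin n) (Fin n ⊕ Fin n) F).IsDiag) :
    ∃ d e : Fin n ⊕ Fin n → F, (t : Matrix (Fin n ⊕ Fin n) (Fin n ⊕ Fin n) F) = diagonal d ∧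
      ((t⁻¹ : Matrix.symplecticGroup (Fin n) F) : Matrix (Fin n ⊕ Fin n) (Fin n ⊕ Fin n) F) = diagonal e ∧
      (∀ x, d x * e x = 1) ∧ (∀ k : Fin n, d (Sum.inl k) * d (Sum.inr k) = 1) := by
  set d : Fin n ⊕ Fin n → F := fun x => (t : Matrix (Fin n ⊕ Fin n) (Fin n ⊕ Fin n) F) x x with hd
  have htd : (t : Matrix (Fin n ⊕ Fin n) (Fin n ⊕ Fin n) F) = diagonal d := ht.diagonal_diag.symm
  have hmem := t.2
  rw [SymplecticGroup.mem_iff, htd, diagonal_transpose] at hmem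
  have key : ∀ k : Fin n, d (Sum.inl k) * d (Sum.inr k) = 1 := by
    intro k
    have h2 := congrFun (congrFun hmem (Sum.inl k)) (Sum.inr k)
    rw [mul_diagonal, diagonal_mul] at h2
    have hJ : J (Fin n) F (Sum.inl k) (Sum.inr k) = -1 := by
      rw [J, fromBlocks_apply₁₂, Matrix.neg_apply, one_apply_eq]
    rw [hJ] at h2
    linear_combination -h2
  refine ⟨d, Sum.elim (fun k => d (Sum.inr k)) (fun k => d (Sum.inl k)), htd, ?_, ?_, key⟩
  · rw [SymplecticGroup.coe_inv' t, htd]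
    apply inv_eq_right_inv
    rw [diagonal_mul_diagonal]
    have : (fun x => d x * Sum.elim (fun k => d (Sum.inr k)) (fun k => d (Sum.inl k)) x) =
        fun _ => (1:F) := by
      funext x
      rcases x with k | k
      · simpa using key k
      · simpa using mul_comm (d (Sum.inr k)) (d (Sum.inl k)) ▸ key k
    rw [this, diagonal_one]
  · intro x
    rcases x with k | k
    · simpa using key k
    · simp only [Sum.elim_inr]
      linear_combination key k

lemma sl2_det {g : Matrix.SpecialLinearGroup (Fin 2) F} :
    g.1 0 0 * g.1 1 1 - g.1 0 1 * g.1 1 0 = 1 := by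
  have := g.2
  rwa [Matrix.det_fin_two] at this

/-- the embedding `SL₂ → Sp_{2n}` acting on the `i`-th hyperbolic plane -/
def psiHom (i : Fin n) : Matrix.SpecialLinearGroup (Fin 2) F →* Matrix.symplecticGroup (Fin n) F where
  toFun g := ⟨psiM i (g.1 0 0) (g.1 0 1) (g.1 1 0) (g.1 1 1), psiM_mem i _ _ _ _ sl2_det⟩
  map_one' := by
    apply Subtype.ext
    show psiM i _ _ _ _ = _
    rw [show ((1 : Matrix.SpecialLinearGroup (Fin 2) F) : Matrix (Fin 2) (Fin 2) F) = 1 from rfl]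
    rw [show (1 : Matrix (Fin 2) (Fin 2) F) 0 0 = 1 from one_apply_eq _,
      show (1 : Matrix (Fin 2) (Fin 2) F) 1 1 = 1 from one_apply_eq _,
      show (1 : Matrix (Fin 2) (Fin 2) F) 0 1 = 0 from one_apply_ne (by decide),
      show (1 : Matrix (Fin 2) (Fin 2) F) 1 0 = 0 from one_apply_ne (by decide)]
    exact pOne_one _ _
  map_mul' g h := by
    apply Subtype.ext
    show psiM i _ _ _ _ = psiM i _ _ _ _ * psiM i _ _ _ _
    rw [psiM, psiM, psiM, pOne_mul _ _ (by simp : (Sum.inl i : Fin n ⊕ Fin n) ≠ Sum.inr i)]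
    refine pOne_congr ?_ ?_ ?_ ?_ <;>
      simp [Matrix.mul_apply, Fin.sum_univ_two]

/-- the glued embedding `SL₂ → Sp_{2n}` for the inverse-pair case -/
def gvHom (i j : Fin n) (hij : i ≠ j) :
    Matrix.SpecialLinearGroup (Fin 2) F →* Matrix.symplecticGroup (Fin n) F where
  toFun g := ⟨gvM i j (g.1 0 0) (g.1 0 1) (g.1 1 0) (g.1 1 1), gvM_mem hij _ _ _ _ sl2_det⟩
  map_one' := by
    apply Subtype.ext
    show gvM i j _ _ _ _ = _
    rw [show ((1 : Matrix.SpecialLinearGroup (Fin 2) F) : Matrix (Fin 2) (Fin 2) F) = 1 from rfl]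
    rw [show (1 : Matrix (Fin 2) (Fin 2) F) 0 0 = 1 from one_apply_eq _,
      show (1 : Matrix (Fin 2) (Fin 2) F) 1 1 = 1 from one_apply_eq _,
      show (1 : Matrix (Fin 2) (Fin 2) F) 0 1 = 0 from one_apply_ne (by decide),
      show (1 : Matrix (Fin 2) (Fin 2) F) 1 0 = 0 from one_apply_ne (by decide)]
    exact gvM_one
  map_mul' g h := by
    apply Subtype.ext
    show gvM i j _ _ _ _ = gvM i j _ _ _ _ * gvM i j _ _ _ _
    rw [gvM_mul hij]
    have e1 : (g * h).1 0 0 = g.1 0 0 * h.1 0 0 + g.1 0 1 * h.1 1 0 := by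
      simp [Matrix.mul_apply, Fin.sum_univ_two]
    have e2 : (g * h).1 0 1 = g.1 0 0 * h.1 0 1 + g.1 0 1 * h.1 1 1 := by
      simp [Matrix.mul_apply, Fin.sum_univ_two]
    have e3 : (g * h).1 1 0 = g.1 1 0 * h.1 0 0 + g.1 1 1 * h.1 1 0 := by
      simp [Matrix.mul_apply, Fin.sum_univ_two]
    have e4 : (g * h).1 1 1 = g.1 1 0 * h.1 0 1 + g.1 1 1 * h.1 1 1 := by
      simp [Matrix.mul_apply, Fin.sum_univ_two]
    rw [e1, e2, e3, e4]

/-- the glued embedding `SL₂ → Sp_{2n}` for the equal-pair case -/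
def gmHom (i j : Fin n) (hij : i ≠ j) :
    Matrix.SpecialLinearGroup (Fin 2) F →* Matrix.symplecticGroup (Fin n) F where
  toFun g := ⟨gmM i j (g.1 0 0) (g.1 0 1) (g.1 1 0) (g.1 1 1), gmM_mem hij _ _ _ _ sl2_det⟩
  map_one' := by
    apply Subtype.ext
    show gmM i j _ _ _ _ = _
    rw [show ((1 : Matrix.SpecialLinearGroup (Fin 2) F) : Matrix (Fin 2) (Fin 2) F) = 1 from rfl]
    rw [show (1 : Matrix (Fin 2) (Fin 2) F) 0 0 = 1 from one_apply_eq _,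
      show (1 : Matrix (Fin 2) (Fin 2) F) 1 1 = 1 from one_apply_eq _,
      show (1 : Matrix (Fin 2) (Fin 2) F) 0 1 = 0 from one_apply_ne (by decide),
      show (1 : Matrix (Fin 2) (Fin 2) F) 1 0 = 0 from one_apply_ne (by decide)]
    exact gmM_one
  map_mul' g h := by
    apply Subtype.ext
    show gmM i j _ _ _ _ = gmM i j _ _ _ _ * gmM i j _ _ _ _
    rw [gmM_mul hij]
    have e1 : (g * h).1 0 0 = g.1 0 0 * h.1 0 0 + g.1 0 1 * h.1 1 0 := by
      simp [Matrix.mul_apply, Fin.sum_univ_two]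
    have e2 : (g * h).1 0 1 = g.1 0 0 * h.1 0 1 + g.1 0 1 * h.1 1 1 := by
      simp [Matrix.mul_apply, Fin.sum_univ_two]
    have e3 : (g * h).1 1 0 = g.1 1 0 * h.1 0 0 + g.1 1 1 * h.1 1 0 := by
      simp [Matrix.mul_apply, Fin.sum_univ_two]
    have e4 : (g * h).1 1 1 = g.1 1 0 * h.1 0 1 + g.1 1 1 * h.1 1 1 := by
      simp [Matrix.mul_apply, Fin.sum_univ_two]
    rw [e1, e2, e3, e4]

section homs
variable {i j : Fin n}

lemma psiHom_injective (i : Fin n) :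
    Function.Injective (psiHom (F := F) (n := n) i) := by
  intro g h hgh
  have huv : (Sum.inl i : Fin n ⊕ Fin n) ≠ Sum.inr i := by simp
  have H : psiM i (g.1 0 0) (g.1 0 1) (g.1 1 0) (g.1 1 1) =
      psiM i (h.1 0 0) (h.1 0 1) (h.1 1 0) (h.1 1 1) := congrArg Subtype.val hgh
  have h11 := congrFun (congrFun H (Sum.inl i)) (Sum.inl i)
  have h12 := congrFun (congrFun H (Sum.inl i)) (Sum.inr i)
  have h21 := congrFun (congrFun H (Sum.inr i)) (Sum.inl i)
  have h22 := congrFun (congrFun H (Sum.inr i)) (Sum.inr i)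
  rw [psiM, psiM, pOne_apply_p _ _ huv, pOne_apply_p _ _ huv] at h11
  rw [psiM, psiM, pOne_apply_q _ _ huv, pOne_apply_q _ _ huv] at h12
  rw [psiM, psiM, pOne_apply_r _ _ huv, pOne_apply_r _ _ huv] at h21
  rw [psiM, psiM, pOne_apply_s _ _ huv, pOne_apply_s _ _ huv] at h22
  apply Subtype.ext
  apply Matrix.ext
  intro a b
  fin_cases a <;> fin_cases b <;> assumption

lemma gvHom_injective (hij : i ≠ j) :
    Function.Injective (gvHom (F := F) (n := n) i j hij) := by
  intro g h hgh
  have huv : (Sum.inl i : Fin n ⊕ Fin n) ≠ Sum.inr j := by simp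
  have n1 : (Sum.inl j : Fin n ⊕ Fin n) ≠ Sum.inl i := by simp [hij.symm]
  have n2 : (Sum.inl j : Fin n ⊕ Fin n) ≠ Sum.inr j := by simp
  have n3 : (Sum.inr i : Fin n ⊕ Fin n) ≠ Sum.inl i := by simp
  have n4 : (Sum.inr i : Fin n ⊕ Fin n) ≠ Sum.inr j := by simp [hij]
  have H : gvM i j (g.1 0 0) (g.1 0 1) (g.1 1 0) (g.1 1 1) =
      gvM i j (h.1 0 0) (h.1 0 1) (h.1 1 0) (h.1 1 1) := congrArg Subtype.val hgh
  rw [gvM_eq hij, gvM_eq hij] at H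
  have h11 := congrFun (congrFun H (Sum.inl i)) (Sum.inl i)
  have h12 := congrFun (congrFun H (Sum.inl i)) (Sum.inr j)
  have h21 := congrFun (congrFun H (Sum.inr j)) (Sum.inl i)
  have h22 := congrFun (congrFun H (Sum.inr j)) (Sum.inr j)
  rw [oneblk2_apply_p _ _ _ _ huv n1 n2 n3 n4, oneblk2_apply_p _ _ _ _ huv n1 n2 n3 n4] at h11
  rw [oneblk2_apply_q _ _ _ _ huv n1 n2 n3 n4, oneblk2_apply_q _ _ _ _ huv n1 n2 n3 n4] at h12
  rw [oneblk2_apply_r _ _ _ _ huv n1 n2 n3 n4, oneblk2_apply_r _ _ _ _ huv n1 n2 n3 n4] at h21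
  rw [oneblk2_apply_s _ _ _ _ huv n1 n2 n3 n4, oneblk2_apply_s _ _ _ _ huv n1 n2 n3 n4] at h22
  apply Subtype.ext
  apply Matrix.ext
  intro a b
  fin_cases a <;> fin_cases b <;> assumption

lemma gmHom_injective (hij : i ≠ j) :
    Function.Injective (gmHom (F := F) (n := n) i j hij) := by
  intro g h hgh
  have huv : (Sum.inl i : Fin n ⊕ Fin n) ≠ Sum.inl j := by simp [hij]
  have n1 : (Sum.inr i : Fin n ⊕ Fin n) ≠ Sum.inl i := by simp
  have n2 : (Sum.inr i : Fin n ⊕ Fin n) ≠ Sum.inl j := by simp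
  have n3 : (Sum.inr j : Fin n ⊕ Fin n) ≠ Sum.inl i := by simp
  have n4 : (Sum.inr j : Fin n ⊕ Fin n) ≠ Sum.inl j := by simp
  have H : gmM i j (g.1 0 0) (g.1 0 1) (g.1 1 0) (g.1 1 1) =
      gmM i j (h.1 0 0) (h.1 0 1) (h.1 1 0) (h.1 1 1) := congrArg Subtype.val hgh
  rw [gmM_eq hij, gmM_eq hij] at H
  have h11 := congrFun (congrFun H (Sum.inl i)) (Sum.inl i)
  have h12 := congrFun (congrFun H (Sum.inl i)) (Sum.inl j)
  have h21 := congrFun (congrFun H (Sum.inl j)) (Sum.inl i)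
  have h22 := congrFun (congrFun H (Sum.inl j)) (Sum.inl j)
  rw [oneblk2_apply_p _ _ _ _ huv n1 n2 n3 n4, oneblk2_apply_p _ _ _ _ huv n1 n2 n3 n4] at h11
  rw [oneblk2_apply_q _ _ _ _ huv n1 n2 n3 n4, oneblk2_apply_q _ _ _ _ huv n1 n2 n3 n4] at h12
  rw [oneblk2_apply_r _ _ _ _ huv n1 n2 n3 n4, oneblk2_apply_r _ _ _ _ huv n1 n2 n3 n4] at h21
  rw [oneblk2_apply_s _ _ _ _ huv n1 n2 n3 n4, oneblk2_apply_s _ _ _ _ huv n1 n2 n3 n4] at h22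
  apply Subtype.ext
  apply Matrix.ext
  intro a b
  fin_cases a <;> fin_cases b <;> assumption

lemma gvM_congr {i j : Fin n} {p q r s p' q' r' s' : F}
    (hp : p = p') (hq : q = q') (hr : r = r') (hs : s = s') :
    gvM i j p q r s = gvM i j p' q' r' s' := by
  subst hp; subst hq; subst hr; subst hs; rfl

lemma gmM_congr {i j : Fin n} {p q r s p' q' r' s' : F}
    (hp : p = p') (hq : q = q') (hr : r = r') (hs : s = s') :
    gmM i j p q r s = gmM i j p' q' r' s' := by
  subst hp; subst hq; subst hr; subst hs; rfl

lemma coe_conj (t k : Matrix.symplecticGroup (Fin n) F) :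
    ((t * k * t⁻¹ : Matrix.symplecticGroup (Fin n) F) : Matrix (Fin n ⊕ Fin n) (Fin n ⊕ Fin n) F) =
      (t : Matrix (Fin n ⊕ Fin n) (Fin n ⊕ Fin n) F) * (k : Matrix (Fin n ⊕ Fin n) (Fin n ⊕ Fin n) F) *
      ((t⁻¹ : Matrix.symplecticGroup (Fin n) F) : Matrix (Fin n ⊕ Fin n) (Fin n ⊕ Fin n) F) := rfl

lemma psiHom_norm (i : Fin n) (t : Matrix.symplecticGroup (Fin n) F)
    (ht : (t : Matrix (Fin n ⊕ Fin n) (Fin n ⊕ Fin n) F).IsDiag) :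
    ∀ k ∈ (psiHom (F := F) i).range, t * k * t⁻¹ ∈ (psiHom (F := F) i).range := by
  rintro k ⟨g, rfl⟩
  obtain ⟨d, e, htd, hte, hde, hJr⟩ := diag_facts t ht
  refine ⟨⟨!![d (Sum.inl i) * g.1 0 0 * e (Sum.inl i), d (Sum.inl i) * g.1 0 1 * e (Sum.inr i);
      d (Sum.inr i) * g.1 1 0 * e (Sum.inl i), d (Sum.inr i) * g.1 1 1 * e (Sum.inr i)], ?_⟩, ?_⟩
  · rw [Matrix.det_fin_two_of]
    have h1 := hde (Sum.inl i)
    have h2 := hde (Sum.inr i)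
    have h3 := sl2_det (g := g)
    linear_combination (d (Sum.inr i) * e (Sum.inr i) * (g.1 0 0 * g.1 1 1 - g.1 0 1 * g.1 1 0)) * h1 +
      (g.1 0 0 * g.1 1 1 - g.1 0 1 * g.1 1 0) * h2 + h3
  · apply Subtype.ext
    rw [coe_conj, htd, hte]
    show psiM i _ _ _ _ = diagonal d * psiM i _ _ _ _ * diagonal e
    rw [psiM, psiM, diagonal_conj_pOne d e hde]
    refine pOne_congr ?_ ?_ ?_ ?_ <;> simp

lemma gvHom_norm (i j : Fin n) (hij : i ≠ j) (t : Matrix.symplecticGroup (Fin n) F)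
    (ht : (t : Matrix (Fin n ⊕ Fin n) (Fin n ⊕ Fin n) F).IsDiag) :
    ∀ k ∈ (gvHom (F := F) i j hij).range, t * k * t⁻¹ ∈ (gvHom (F := F) i j hij).range := by
  rintro k ⟨g, rfl⟩
  obtain ⟨d, e, htd, hte, hde, hJr⟩ := diag_facts t ht
  refine ⟨⟨!![d (Sum.inl i) * g.1 0 0 * e (Sum.inl i), d (Sum.inl i) * g.1 0 1 * e (Sum.inr j);
      d (Sum.inr j) * g.1 1 0 * e (Sum.inl i), d (Sum.inr j) * g.1 1 1 * e (Sum.inr j)], ?_⟩, ?_⟩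
  · rw [Matrix.det_fin_two_of]
    have h1 := hde (Sum.inl i)
    have h2 := hde (Sum.inr j)
    have h3 := sl2_det (g := g)
    linear_combination (d (Sum.inr j) * e (Sum.inr j) * (g.1 0 0 * g.1 1 1 - g.1 0 1 * g.1 1 0)) * h1 +
      (g.1 0 0 * g.1 1 1 - g.1 0 1 * g.1 1 0) * h2 + h3
  · apply Subtype.ext
    rw [coe_conj, htd, hte]
    show gvM i j _ _ _ _ = diagonal d * gvM i j _ _ _ _ * diagonal e
    rw [diagonal_conj_gvM d e _ _ _ _ hde (hJr i) (hJr j)]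
    refine gvM_congr ?_ ?_ ?_ ?_ <;> simp

lemma gmHom_norm (i j : Fin n) (hij : i ≠ j) (t : Matrix.symplecticGroup (Fin n) F)
    (ht : (t : Matrix (Fin n ⊕ Fin n) (Fin n ⊕ Fin n) F).IsDiag) :
    ∀ k ∈ (gmHom (F := F) i j hij).range, t * k * t⁻¹ ∈ (gmHom (F := F) i j hij).range := by
  rintro k ⟨g, rfl⟩
  obtain ⟨d, e, htd, hte, hde, hJr⟩ := diag_facts t ht
  refine ⟨⟨!![d (Sum.inl i) * g.1 0 0 * e (Sum.inl i), d (Sum.inl i) * g.1 0 1 * e (Sum.inl j);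
      d (Sum.inl j) * g.1 1 0 * e (Sum.inl i), d (Sum.inl j) * g.1 1 1 * e (Sum.inl j)], ?_⟩, ?_⟩
  · rw [Matrix.det_fin_two_of]
    have h1 := hde (Sum.inl i)
    have h2 := hde (Sum.inl j)
    have h3 := sl2_det (g := g)
    linear_combination (d (Sum.inl j) * e (Sum.inl j) * (g.1 0 0 * g.1 1 1 - g.1 0 1 * g.1 1 0)) * h1 +
      (g.1 0 0 * g.1 1 1 - g.1 0 1 * g.1 1 0) * h2 + h3
  · apply Subtype.ext
    rw [coe_conj, htd, hte]
    show gmM i j _ _ _ _ = diagonal d * gmM i j _ _ _ _ * diagonal e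
    rw [diagonal_conj_gmM d e _ _ _ _ hde (hJr i) (hJr j)]
    refine gmM_congr ?_ ?_ ?_ ?_ <;> simp

end homs

def e2 : Fin 1 ⊕ Fin 1 ≃ Fin 2 where
  toFun := Sum.elim (fun _ => 0) (fun _ => 1)
  invFun k := if k = 0 then Sum.inl 0 else Sum.inr 0
  left_inv := by rintro (x | x) <;> simp [Subsingleton.elim x 0]
  right_inv := by intro k; fin_cases k <;> simp

lemma mem_sp1 (g : Matrix.SpecialLinearGroup (Fin 2) F) :
    (g.1.submatrix e2 e2 : Matrix (Fin 1 ⊕ Fin 1) (Fin 1 ⊕ Fin 1) F) ∈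
      Matrix.symplecticGroup (Fin 1) F := by
  rw [SymplecticGroup.mem_iff]
  have hdet := sl2_det (g := g)
  ext x y
  rcases x with x | x <;> rcases y with y | y <;>
    rw [Subsingleton.elim x 0] <;> try rw [Subsingleton.elim y 0]
  all_goals
    simp [Matrix.mul_apply, Fintype.sum_sum_type, J, fromBlocks, e2, Fin.sum_univ_one]
  · ring
  · linear_combination -hdet
  · linear_combination hdet
  · ring

lemma sp1_det (A : Matrix.symplecticGroup (Fin 1) F) :
    ((A : Matrix (Fin 1 ⊕ Fin 1) (Fin 1 ⊕ Fin 1) F).submatrix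
      (e2.symm : Fin 2 ≃ Fin 1 ⊕ Fin 1) e2.symm).det = 1 := by
  have hmem := A.2
  rw [SymplecticGroup.mem_iff] at hmem
  have h := congrFun (congrFun hmem (Sum.inl 0)) (Sum.inr 0)
  rw [Matrix.det_fin_two]
  simp only [Matrix.mul_apply, Fintype.sum_sum_type, J, fromBlocks, transpose_apply,
    Fin.sum_univ_one, Matrix.of_apply, Sum.elim_inl, Sum.elim_inr, Matrix.zero_apply, Matrix.neg_apply,
    one_apply_eq, mul_zero, zero_mul, add_zero, zero_add, mul_one, mul_neg, neg_mul] at h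
  simp [e2, submatrix_apply]
  linear_combination -h

def sl2_iso_sp1 : Matrix.SpecialLinearGroup (Fin 2) F ≃* Matrix.symplecticGroup (Fin 1) F where
  toFun g := ⟨g.1.submatrix e2 e2, mem_sp1 g⟩
  invFun A := ⟨(A : Matrix (Fin 1 ⊕ Fin 1) (Fin 1 ⊕ Fin 1) F).submatrix
      (e2.symm : Fin 2 ≃ Fin 1 ⊕ Fin 1) e2.symm, sp1_det A⟩
  left_inv g := by
    apply Subtype.ext
    show (g.1.submatrix e2 e2).submatrix (e2.symm : Fin 2 ≃ Fin 1 ⊕ Fin 1) e2.symm = g.1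
    rw [submatrix_submatrix]
    simp
  right_inv A := by
    apply Subtype.ext
    show (((A : Matrix (Fin 1 ⊕ Fin 1) (Fin 1 ⊕ Fin 1) F).submatrix
      (e2.symm : Fin 2 ≃ Fin 1 ⊕ Fin 1) e2.symm).submatrix e2 e2) = _
    rw [submatrix_submatrix]
    simp
  map_mul' g h := by
    apply Subtype.ext
    show (g.1 * h.1).submatrix e2 e2 = (g.1.submatrix e2 e2) * (h.1.submatrix e2 e2)
    exact (submatrix_mul_equiv g.1 h.1 e2 e2 e2).symm

lemma comm_mul {X A B : Matrix (Fin n ⊕ Fin n) (Fin n ⊕ Fin n) F}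
    (h1 : X * A = A * X) (h2 : X * B = B * X) : X * (A * B) = (A * B) * X := by
  rw [← Matrix.mul_assoc, h1, Matrix.mul_assoc, h2, ← Matrix.mul_assoc]

lemma range_comm {Φ Ψ : Matrix.SpecialLinearGroup (Fin 2) F →* Matrix.symplecticGroup (Fin n) F}
    (h : ∀ g h', (Φ g : Matrix (Fin n ⊕ Fin n) (Fin n ⊕ Fin n) F) * (Ψ h' : Matrix _ _ F) =
      (Ψ h' : Matrix (Fin n ⊕ Fin n) (Fin n ⊕ Fin n) F) * (Φ g : Matrix _ _ F)) :
    ∀ k ∈ Φ.range, ∀ y ∈ Ψ.range, k * y = y * k := by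
  rintro k ⟨g, rfl⟩ y ⟨h', rfl⟩
  exact Subtype.ext (h g h')

lemma psiM_comm_psiM {k l : Fin n} (hkl : k ≠ l) (p q r s P Q R S : F) :
    psiM k p q r s * psiM l P Q R S = psiM l P Q R S * psiM k p q r s := by
  rw [psiM, psiM]
  exact pOne_comm (Sum.inl k) (Sum.inr k) (Sum.inl l) (Sum.inr l)
    (by simp [hkl]) (by simp) (by simp) (by simp [hkl]) _ _ _ _ _ _ _ _

lemma psiM_comm_gvM {k i j : Fin n} (hki : k ≠ i) (hkj : k ≠ j) (p q r s P Q R S : F) :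
    psiM k p q r s * gvM i j P Q R S = gvM i j P Q R S * psiM k p q r s := by
  rw [psiM, gvM]
  exact comm_mul
    (pOne_comm (Sum.inl k) (Sum.inr k) (Sum.inl i) (Sum.inr j)
      (by simp [hki]) (by simp) (by simp) (by simp [hkj]) _ _ _ _ _ _ _ _)
    (pOne_comm (Sum.inl k) (Sum.inr k) (Sum.inl j) (Sum.inr i)
      (by simp [hkj]) (by simp) (by simp) (by simp [hki]) _ _ _ _ _ _ _ _)

lemma psiM_comm_gmM {k i j : Fin n} (hki : k ≠ i) (hkj : k ≠ j) (p q r s P Q R S : F) :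
    psiM k p q r s * gmM i j P Q R S = gmM i j P Q R S * psiM k p q r s := by
  rw [psiM, gmM]
  exact comm_mul
    (pOne_comm (Sum.inl k) (Sum.inr k) (Sum.inl i) (Sum.inl j)
      (by simp [hki]) (by simp [hkj]) (by simp) (by simp) _ _ _ _ _ _ _ _)
    (pOne_comm (Sum.inl k) (Sum.inr k) (Sum.inr i) (Sum.inr j)
      (by simp) (by simp) (by simp [hki]) (by simp [hkj]) _ _ _ _ _ _ _ _)

lemma sub_comm {s k : Matrix.symplecticGroup (Fin n) F}
    (h : (s : Matrix (Fin n ⊕ Fin n) (Fin n ⊕ Fin n) F) * (k : Matrix _ _ F) =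
      (k : Matrix (Fin n ⊕ Fin n) (Fin n ⊕ Fin n) F) * (s : Matrix _ _ F)) :
    s * k = k * s := Subtype.ext h

lemma sub_noncomm {s y : Matrix.symplecticGroup (Fin n) F} {d : Fin n ⊕ Fin n → F}
    (hs : (s : Matrix (Fin n ⊕ Fin n) (Fin n ⊕ Fin n) F) = diagonal d)
    {x z : Fin n ⊕ Fin n} (hy : (y : Matrix (Fin n ⊕ Fin n) (Fin n ⊕ Fin n) F) x z = 1)
    (hd : d x ≠ d z) : s * y ≠ y * s := by
  intro h
  have h' : (s : Matrix (Fin n ⊕ Fin n) (Fin n ⊕ Fin n) F) * (y : Matrix _ _ F) =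
      (y : Matrix (Fin n ⊕ Fin n) (Fin n ⊕ Fin n) F) * (s : Matrix _ _ F) :=
    congrArg Subtype.val h
  rw [hs] at h'
  have h2 := congrFun (congrFun h' x) z
  rw [diagonal_mul, mul_diagonal, hy, mul_one, one_mul] at h2
  exact hd h2

/-- the standard unipotent element of SL₂ -/
def uTri : Matrix.SpecialLinearGroup (Fin 2) F :=
  ⟨!![1, 1; 0, 1], by simp [Matrix.det_fin_two_of]⟩

lemma uTri_01 : (uTri (F := F)).1 0 1 = 1 := by simp [uTri]

lemma unit_sq_cases {a : Fˣ} (h : a ^ 2 = 1) : a = 1 ∨ a = -1 := by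
  have hF : (a : F) * (a : F) = 1 := by rw [← Units.val_mul, ← sq, h, Units.val_one]
  rcases mul_self_eq_one_iff.mp hF with h1 | h1
  · exact Or.inl (Units.ext (by rw [h1, Units.val_one]))
  · exact Or.inr (Units.ext (by rw [h1, Units.val_neg, Units.val_one]))

lemma coe_eq_inv {a : Fˣ} (h : a ^ 2 = 1) : (a : F) = ((a⁻¹ : Fˣ) : F) := by
  have : a = a⁻¹ := eq_inv_of_mul_eq_one_left (by rw [← sq, h])
  exact congrArg Units.val this

lemma coe_ne_inv {a : Fˣ} (h : a ^ 2 ≠ 1) : (a : F) ≠ ((a⁻¹ : Fˣ) : F) := by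
  intro hc
  refine h ?_
  rw [sq]
  nth_rewrite 2 [show a = a⁻¹ from Units.ext hc]
  exact mul_inv_cancel a

lemma exists_third (h3 : 3 ≤ n) (i j : Fin n) : ∃ k : Fin n, k ≠ i ∧ k ≠ j := by
  have hcard : ({i, j} : Finset (Fin n)).card < Fintype.card (Fin n) := by
    have h2 : ({i, j} : Finset (Fin n)).card ≤ 2 :=
      (Finset.card_insert_le _ _).trans (by simp)
    rw [Fintype.card_fin]
    omega
  have hne : ({i, j} : Finset (Fin n)) ≠ Finset.univ := by
    intro h
    rw [h, Finset.card_univ] at hcard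
    exact lt_irrefl _ hcard
  have : ¬ ∀ x, x ∈ ({i, j} : Finset (Fin n)) := fun h => hne (Finset.eq_univ_iff_forall.mpr h)
  obtain ⟨k, hk⟩ := not_forall.mp this
  exact ⟨k, by simpa using hk⟩

end Sp42


open Sp42 Matrix

/-- **Lemma 4.2.** Let `s ∈ Sp_{2n}(F)`, `n ≥ 2`, be the diagonal element with
eigenvalues `a i` and `(a i)⁻¹` on the natural symplectic module, non-central and
non-regular. Then either `n = 2` and, up to permuting and inverting `a 1, a 2`, either
`a 1 = a 2 = b` with `b² ≠ 1`, or `char F ≠ 2` and `(a 1, a 2) = (1, -1)`; or there are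
subgroups `K ≅ SL₂(F)` and `Y ≅ Sp_{2m}(F)` (`m ≥ 1`), normalized by the diagonal
maximal torus, commuting with each other, with `[K, s] = 1` and `[Y, s] ≠ 1`. -/
theorem Spn_nonregular_commuting_subsystem_subgroups
    {F : Type*} [Field F] [IsAlgClosed F] {n : ℕ} (hn : 2 ≤ n)
    (a : Fin n → Fˣ) (s : Matrix.symplecticGroup (Fin n) F)
    (hs : (s : Matrix (Fin n ⊕ Fin n) (Fin n ⊕ Fin n) F) =
      Matrix.diagonal (Sum.elim (fun i => (a i : F)) (fun i => (((a i)⁻¹ : Fˣ) : F))))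
    (hnoncentral : ¬ (∀ i, a i = 1) ∧ ¬ (∀ i, a i = -1))
    (hnonregular : (∃ i j, i ≠ j ∧ (a i = a j ∨ a i * a j = 1)) ∨ ∃ i, (a i) ^ 2 = 1) :
    (n = 2 ∧
      ((∃ b : Fˣ, b ^ 2 ≠ 1 ∧ ∀ i, a i = b ∨ a i = b⁻¹) ∨
       (ringChar F ≠ 2 ∧ ∃ i j, i ≠ j ∧ a i = 1 ∧ a j = -1))) ∨
    (∃ K Y : Subgroup (Matrix.symplecticGroup (Fin n) F),
      (∀ t : Matrix.symplecticGroup (Fin n) F,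
        (t : Matrix (Fin n ⊕ Fin n) (Fin n ⊕ Fin n) F).IsDiag →
          ∀ k ∈ K, t * k * t⁻¹ ∈ K) ∧
      (∀ t : Matrix.symplecticGroup (Fin n) F,
        (t : Matrix (Fin n ⊕ Fin n) (Fin n ⊕ Fin n) F).IsDiag →
          ∀ y ∈ Y, t * y * t⁻¹ ∈ Y) ∧
      (∀ k ∈ K, ∀ y ∈ Y, k * y = y * k) ∧
      (∀ k ∈ K, s * k = k * s) ∧
      (∃ y ∈ Y, s * y ≠ y * s) ∧
      Nonempty (K ≃* Matrix.SpecialLinearGroup (Fin 2) F) ∧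
      (∃ m : ℕ, 1 ≤ m ∧ Nonempty (Y ≃* Matrix.symplecticGroup (Fin m) F))) := by
  classical
  set d₀ : Fin n ⊕ Fin n → F :=
    Sum.elim (fun i => (a i : F)) (fun i => (((a i)⁻¹ : Fˣ) : F)) with hd₀
  by_cases hall : ∀ l, a l ^ 2 = 1
  · -- all eigenvalues are ±1
    obtain ⟨j0, hj0'⟩ := not_forall.mp hnoncentral.1
    have hj0 : a j0 = -1 := (unit_sq_cases (hall j0)).resolve_left hj0'
    obtain ⟨i0, hi0'⟩ := not_forall.mp hnoncentral.2
    have hi0 : a i0 = 1 := (unit_sq_cases (hall i0)).resolve_right hi0'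
    have h1ne : (1 : Fˣ) ≠ -1 := by
      intro h
      exact hj0' (by rw [hj0, ← h])
    have hij : i0 ≠ j0 := by
      intro h
      rw [h, hj0] at hi0
      exact h1ne hi0.symm
    have hFne : (1 : F) ≠ -1 := by
      intro h
      exact h1ne (Units.ext (by simpa using h))
    have hchar : ringChar F ≠ 2 := by
      intro h2
      have h20 : (2 : F) = 0 := by
        have : ((2 : ℕ) : F) = 0 :=
          (CharP.cast_eq_zero_iff F (ringChar F) 2).mpr (by rw [h2])
        simpa using this
      exact hFne (by linear_combination h20)
    rcases eq_or_lt_of_le hn with hn2 | hn3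
    · exact Or.inl ⟨hn2.symm, Or.inr ⟨hchar, i0, j0, hij, hi0, hj0⟩⟩
    · obtain ⟨k, hki, hkj⟩ := exists_third (by omega) i0 j0
      refine Or.inr ⟨(psiHom k).range, (gvHom i0 j0 hij).range,
        fun t ht => psiHom_norm k t ht, fun t ht => gvHom_norm i0 j0 hij t ht,
        range_comm (fun g h' => psiM_comm_gvM hki hkj _ _ _ _ _ _ _ _), ?_, ?_,
        ⟨(MonoidHom.ofInjective (psiHom_injective k)).symm⟩,
        ⟨1, le_refl 1, ⟨(MonoidHom.ofInjective (gvHom_injective hij)).symm.trans sl2_iso_sp1⟩⟩⟩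
      · rintro kk ⟨g, rfl⟩
        apply sub_comm
        rw [hs]
        show diagonal d₀ * psiM k _ _ _ _ = psiM k _ _ _ _ * diagonal d₀
        rw [psiM]
        exact diagonal_comm_pOne d₀ _ _
          (by simp only [hd₀, Sum.elim_inl, Sum.elim_inr]; exact coe_eq_inv (hall k)) _ _ _ _
      · refine ⟨gvHom i0 j0 hij uTri, ⟨uTri, rfl⟩, ?_⟩
        refine sub_noncomm hs (x := Sum.inl i0) (z := Sum.inr j0) ?_ ?_
        · show gvM i0 j0 _ _ _ _ (Sum.inl i0) (Sum.inr j0) = 1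
          rw [gvM_eq hij, oneblk2_apply_q _ _ _ _ (by simp) (by simp [hij.symm]) (by simp)
            (by simp) (by simp [hij])]
          exact uTri_01
        · simp only [hd₀, Sum.elim_inl, Sum.elim_inr, hi0, hj0]
          simpa using hFne
  · obtain ⟨l, hl⟩ := not_forall.mp hall
    by_cases hex : ∃ k, a k ^ 2 = 1
    · obtain ⟨k, hk⟩ := hex
      have hkl : k ≠ l := fun h => hl (h ▸ hk)
      refine Or.inr ⟨(psiHom k).range, (psiHom l).range,
        fun t ht => psiHom_norm k t ht, fun t ht => psiHom_norm l t ht,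
        range_comm (fun g h' => psiM_comm_psiM hkl _ _ _ _ _ _ _ _), ?_, ?_,
        ⟨(MonoidHom.ofInjective (psiHom_injective k)).symm⟩,
        ⟨1, le_refl 1, ⟨(MonoidHom.ofInjective (psiHom_injective l)).symm.trans sl2_iso_sp1⟩⟩⟩
      · rintro kk ⟨g, rfl⟩
        apply sub_comm
        rw [hs]
        show diagonal d₀ * psiM k _ _ _ _ = psiM k _ _ _ _ * diagonal d₀
        rw [psiM]
        exact diagonal_comm_pOne d₀ _ _
          (by simp only [hd₀, Sum.elim_inl, Sum.elim_inr]; exact coe_eq_inv hk) _ _ _ _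
      · refine ⟨psiHom l uTri, ⟨uTri, rfl⟩, ?_⟩
        refine sub_noncomm hs (x := Sum.inl l) (z := Sum.inr l) ?_ ?_
        · show psiM l _ _ _ _ (Sum.inl l) (Sum.inr l) = 1
          rw [psiM, pOne_apply_q _ _ (by simp)]
          exact uTri_01
        · simp only [hd₀, Sum.elim_inl, Sum.elim_inr]
          exact coe_ne_inv hl
    · push_neg at hex
      obtain ⟨i, j, hij, hrel⟩ := hnonregular.resolve_right (not_exists.mpr hex)
      rcases eq_or_lt_of_le hn with hn2 | hn3
      · refine Or.inl ⟨hn2.symm, Or.inl ⟨a i, hex i, ?_⟩⟩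
        intro k
        have hk2 : k = i ∨ k = j := by
          by_contra hc
          push_neg at hc
          have d1 : i.val ≠ j.val := fun h => hij (Fin.ext h)
          have d2 : k.val ≠ i.val := fun h => hc.1 (Fin.ext h)
          have d3 : k.val ≠ j.val := fun h => hc.2 (Fin.ext h)
          have e1 := i.isLt
          have e2 := j.isLt
          have e3 := k.isLt
          omega
        rcases hk2 with rfl | rfl
        · exact Or.inl rfl
        · rcases hrel with h | h
          · exact Or.inl h.symm
          · exact Or.inr (eq_inv_of_mul_eq_one_right h)
      · obtain ⟨k, hki, hkj⟩ := exists_third (by omega) i j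
        rcases hrel with heq | hinv
        · refine Or.inr ⟨(gmHom i j hij).range, (psiHom k).range,
            fun t ht => gmHom_norm i j hij t ht, fun t ht => psiHom_norm k t ht,
            range_comm (fun g h' => (psiM_comm_gmM hki hkj _ _ _ _ _ _ _ _).symm), ?_, ?_,
            ⟨(MonoidHom.ofInjective (gmHom_injective hij)).symm⟩,
            ⟨1, le_refl 1, ⟨(MonoidHom.ofInjective (psiHom_injective k)).symm.trans sl2_iso_sp1⟩⟩⟩
          · rintro kk ⟨g, rfl⟩
            apply sub_comm
            rw [hs]
            show diagonal d₀ * gmM i j _ _ _ _ = gmM i j _ _ _ _ * diagonal d₀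
            refine diagonal_comm_gmM d₀ _ _ _ _ ?_ ?_
            · simp only [hd₀, Sum.elim_inl]
              exact congrArg Units.val heq
            · simp only [hd₀, Sum.elim_inr]
              exact congrArg Units.val (congrArg Inv.inv heq)
          · refine ⟨psiHom k uTri, ⟨uTri, rfl⟩, ?_⟩
            refine sub_noncomm hs (x := Sum.inl k) (z := Sum.inr k) ?_ ?_
            · show psiM k _ _ _ _ (Sum.inl k) (Sum.inr k) = 1
              rw [psiM, pOne_apply_q _ _ (by simp)]
              exact uTri_01
            · simp only [hd₀, Sum.elim_inl, Sum.elim_inr]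
              exact coe_ne_inv (hex k)
        · refine Or.inr ⟨(gvHom i j hij).range, (psiHom k).range,
            fun t ht => gvHom_norm i j hij t ht, fun t ht => psiHom_norm k t ht,
            range_comm (fun g h' => (psiM_comm_gvM hki hkj _ _ _ _ _ _ _ _).symm), ?_, ?_,
            ⟨(MonoidHom.ofInjective (gvHom_injective hij)).symm⟩,
            ⟨1, le_refl 1, ⟨(MonoidHom.ofInjective (psiHom_injective k)).symm.trans sl2_iso_sp1⟩⟩⟩
          · rintro kk ⟨g, rfl⟩
            apply sub_comm
            rw [hs]
            show diagonal d₀ * gvM i j _ _ _ _ = gvM i j _ _ _ _ * diagonal d₀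
            refine diagonal_comm_gvM d₀ _ _ _ _ ?_ ?_
            · simp only [hd₀, Sum.elim_inl, Sum.elim_inr]
              exact congrArg Units.val (eq_inv_of_mul_eq_one_left hinv)
            · simp only [hd₀, Sum.elim_inl, Sum.elim_inr]
              exact congrArg Units.val (eq_inv_of_mul_eq_one_right hinv)
          · refine ⟨psiHom k uTri, ⟨uTri, rfl⟩, ?_⟩
            refine sub_noncomm hs (x := Sum.inl k) (z := Sum.inr k) ?_ ?_
            · show psiM k _ _ _ _ (Sum.inl k) (Sum.inr k) = 1
              rw [psiM, pOne_apply_q _ _ (by simp)]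
              exact uTri_01
            · simp only [hd₀, Sum.elim_inl, Sum.elim_inr]
              exact coe_ne_inv (hex k)
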